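/- For every d ≥ 1 and every natural number k, the integral over the unit sphere S^d of (x₁² + x₂²)^k with respect to the surface measure σ equals 2 π^{(d+1)/2} k! / Γ(k + (d+1)/2). Equivalently, the function φ_k(x) = c_k (x₁ + i x₂)^k with c_k = (Γ(k+(d+1)/2) / (2 π^{(d+1)/2} k!))^{1/2} has L²(S^d, σ)-norm equal to 1. -/

import Mathlib

open MeasureTheory Real

open Set Finset Metric

lemma int_pow_gauss (n : ℕ) : Integrable fun x : ℝ => x ^ n * rexp (-x ^ 2) := by
  have h : (-1 : ℝ) < n := by
    have := Nat.cast_nonneg (α := ℝ) n; linarith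
  have := integrable_rpow_mul_exp_neg_mul_sq (b := 1) one_pos h
  simpa [Real.rpow_natCast] using this

lemma radial (n : ℕ) : ∫ r in Ioi (0:ℝ), r ^ n * rexp (-r ^ 2) = Real.Gamma ((n + 1) / 2) / 2 := by
  have h : (-1 : ℝ) < n := by
    have := Nat.cast_nonneg (α := ℝ) n; linarith
  have := integral_rpow_mul_exp_neg_rpow (p := 2) (q := n) two_pos h
  rw [show ((2:ℝ)) = ((2:ℕ):ℝ) by norm_num] at this
  simp_rw [Real.rpow_natCast] at this
  rw [show ((2:ℕ):ℝ) = (2:ℝ) by norm_num] at this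
  rw [this]; ring

lemma moment (m : ℕ) : ∫ x : ℝ, x ^ (2 * m) * rexp (-x ^ 2) = Real.Gamma (m + 1 / 2) := by
  have : ∀ x : ℝ, x ^ (2 * m) * rexp (-x ^ 2) = |x| ^ (2 * m) * rexp (-|x| ^ 2) := by
    intro x
    rw [pow_mul, pow_mul, sq_abs]
  rw [show (fun x : ℝ => x ^ (2 * m) * rexp (-x ^ 2))
      = fun x : ℝ => |x| ^ (2 * m) * rexp (-|x| ^ 2) from funext this]
  rw [integral_comp_abs (f := fun x => x ^ (2 * m) * rexp (-x ^ 2)), radial]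
  rw [show ((2 * m : ℕ) + 1 : ℝ) / 2 = (m : ℝ) + 1 / 2 by push_cast; ring]
  ring

lemma gamma_half_pos (j : ℕ) : 0 < Real.Gamma ((j : ℝ) + 1 / 2) :=
  Real.Gamma_pos_of_pos (by positivity)

lemma gamma_succ_half (j : ℕ) :
    Real.Gamma (((j : ℝ) + 1) + 1 / 2) = ((j : ℝ) + 1 / 2) * Real.Gamma ((j : ℝ) + 1 / 2) := by
  have h : ((j : ℝ) + 1) + 1 / 2 = ((j : ℝ) + 1 / 2) + 1 := by ring
  rw [h, Real.Gamma_add_one (by positivity)]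

lemma gammaSum (k : ℕ) :
    ∑ j ∈ range (k + 1), (k.choose j : ℝ) * Real.Gamma ((j : ℝ) + 1 / 2)
      * Real.Gamma (((k - j : ℕ) : ℝ) + 1 / 2) = π * k.factorial := by
  induction k with
  | zero =>
      simp only [Finset.range_one, Finset.sum_singleton, Nat.choose_self, Nat.cast_one,
        one_mul, Nat.cast_zero, Nat.sub_zero, Nat.factorial_zero, mul_one, zero_add]
      rw [Real.Gamma_one_half_eq, Real.mul_self_sqrt pi_pos.le]
  | succ k ih =>
      set a : ℕ → ℝ := fun j => Real.Gamma ((j : ℝ) + 1 / 2) with ha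
      have hrec : ∀ j : ℕ, a (j + 1) = ((j : ℝ) + 1 / 2) * a j := by
        intro j
        simp only [ha, Nat.cast_add, Nat.cast_one]
        exact gamma_succ_half j
      -- main manipulation
      have key : ∑ j ∈ range (k + 2), ((k+1).choose j : ℝ) * a j * a (k + 1 - j)
          = ((k : ℝ) + 1) * ∑ j ∈ range (k + 1), (k.choose j : ℝ) * a j * a (k - j) := by
        have h1 : ∑ j ∈ range (k + 2), ((k+1).choose j : ℝ) * a j * a (k + 1 - j)
            = (∑ j ∈ range (k + 1), ((k+1).choose (j+1) : ℝ) * a (j+1) * a (k - j))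
              + a 0 * a (k + 1) := by
          rw [Finset.sum_range_succ']
          simp [Nat.succ_sub_succ]
        have h2 : ∀ j ∈ range (k + 1), ((k+1).choose (j+1) : ℝ) * a (j+1) * a (k - j)
            = (k.choose j : ℝ) * a (j+1) * a (k - j)
              + (k.choose (j+1) : ℝ) * a (j+1) * a (k - j) := by
          intro j _
          rw [Nat.choose_succ_succ]
          push_cast
          ring
        have h3 : (∑ j ∈ range (k + 1), (k.choose (j+1) : ℝ) * a (j+1) * a (k - j))
              + a 0 * a (k + 1)
            = ∑ j ∈ range (k + 1), (k.choose j : ℝ) * a j * a (k + 1 - j) := by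
          have e1 : ∑ j ∈ range (k + 2), (k.choose j : ℝ) * a j * a (k + 1 - j)
              = (∑ j ∈ range (k + 1), (k.choose (j+1) : ℝ) * a (j+1) * a (k - j))
                + a 0 * a (k + 1) := by
            rw [Finset.sum_range_succ']
            simp [Nat.succ_sub_succ]
          have e2 : ∑ j ∈ range (k + 2), (k.choose j : ℝ) * a j * a (k + 1 - j)
              = ∑ j ∈ range (k + 1), (k.choose j : ℝ) * a j * a (k + 1 - j) := by
            rw [Finset.sum_range_succ]
            simp [Nat.choose_succ_self]
          rw [← e1, e2]
        rw [h1, Finset.sum_congr rfl h2, Finset.sum_add_distrib, add_assoc, h3,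
          ← Finset.sum_add_distrib]
        rw [Finset.mul_sum]
        refine Finset.sum_congr rfl fun j hj => ?_
        have hjk : j ≤ k := Nat.lt_succ_iff.mp (Finset.mem_range.mp hj)
        have hs : k + 1 - j = (k - j) + 1 := by omega
        rw [hs, hrec j, hrec (k - j)]
        have hc : ((k - j : ℕ) : ℝ) = (k : ℝ) - (j : ℝ) := by
          rw [Nat.cast_sub hjk]
        rw [hc]
        ring
      calc ∑ j ∈ range (k + 1 + 1), ((k+1).choose j : ℝ) * a j * a (k + 1 - j)
          = ((k : ℝ) + 1) * ∑ j ∈ range (k + 1), (k.choose j : ℝ) * a j * a (k - j) := key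
        _ = ((k : ℝ) + 1) * (π * k.factorial) := by rw [ih]
        _ = π * (k + 1).factorial := by
            rw [Nat.factorial_succ]; push_cast; ring

lemma pi_integral (e k : ℕ) :
    ∫ y : Fin (e + 2) → ℝ, (y 0 ^ 2 + y 1 ^ 2) ^ k * rexp (-∑ i, y i ^ 2)
      = Real.Gamma (1 / 2) ^ e * (π * k.factorial) := by
  -- g m : the coordinate factor functions
  set g : ℕ → Fin (e + 2) → ℝ → ℝ := fun m i t =>
    (if i = 0 then t ^ (2 * m) else if i = 1 then t ^ (2 * (k - m)) else 1) * rexp (-t ^ 2)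
    with hg
  have h01 : (0 : Fin (e + 2)) ≠ 1 := by
    intro h
    have := congrArg Fin.val h
    simp at this
  have hsplit : ∀ (h : Fin (e + 2) → ℝ),
      ∏ i, h i = h 0 * (h 1 * ∏ i ∈ (univ.erase 0).erase 1, h i) := by
    intro h
    rw [Finset.mul_prod_erase _ _ (Finset.mem_erase.mpr ⟨h01.symm, Finset.mem_univ 1⟩),
      Finset.mul_prod_erase _ _ (Finset.mem_univ 0)]
  -- rewrite integrand pointwise
  have hpt : ∀ y : Fin (e + 2) → ℝ,
      (y 0 ^ 2 + y 1 ^ 2) ^ k * rexp (-∑ i, y i ^ 2)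
        = ∑ m ∈ range (k + 1), (k.choose m : ℝ) * ∏ i, g m i (y i) := by
    intro y
    have hexp : rexp (-∑ i, y i ^ 2) = ∏ i, rexp (-y i ^ 2) := by
      rw [← Real.exp_sum]
      simp [Finset.sum_neg_distrib]
    rw [add_pow, Finset.sum_mul]
    refine Finset.sum_congr rfl fun m hm => ?_
    have : ∏ i, g m i (y i)
        = (∏ i, (if i = 0 then y i ^ (2 * m) else if i = 1 then y i ^ (2 * (k - m)) else 1))
          * ∏ i, rexp (-y i ^ 2) := by
      rw [← Finset.prod_mul_distrib]
    rw [this, hsplit]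
    have hrest : ∏ i ∈ (univ.erase 0).erase (1 : Fin (e + 2)),
        (if i = 0 then y i ^ (2 * m) else if i = 1 then y i ^ (2 * (k - m)) else 1) = 1 := by
      refine Finset.prod_eq_one fun i hi => ?_
      rw [Finset.mem_erase, Finset.mem_erase] at hi
      rw [if_neg hi.2.1, if_neg hi.1]
    rw [if_pos rfl, if_neg h01.symm, if_pos rfl, hrest, mul_one, hexp]
    ring
  rw [show (fun y : Fin (e + 2) → ℝ => (y 0 ^ 2 + y 1 ^ 2) ^ k * rexp (-∑ i, y i ^ 2))
      = fun y => ∑ m ∈ range (k + 1), (k.choose m : ℝ) * ∏ i, g m i (y i) from funext hpt]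
  have hgint : ∀ m i, Integrable (g m i) := by
    intro m i
    by_cases h0 : i = 0
    · simpa [hg, h0] using int_pow_gauss (2 * m)
    · by_cases h1 : i = 1
      · simpa [hg, h0, h1] using int_pow_gauss (2 * (k - m))
      · simpa [hg, h0, h1] using int_pow_gauss 0
  rw [integral_finset_sum]
  · have hterm : ∀ m ∈ range (k + 1),
        ∫ y : Fin (e + 2) → ℝ, (k.choose m : ℝ) * ∏ i, g m i (y i)
          = (k.choose m : ℝ) * (Real.Gamma ((m : ℝ) + 1 / 2)
              * Real.Gamma (((k - m : ℕ) : ℝ) + 1 / 2) * Real.Gamma (1 / 2) ^ e) := by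
      intro m _
      rw [integral_const_mul, integral_fintype_prod_volume_eq_prod (f := g m), hsplit fun i => ∫ t, g m i t]
      have i0 : ∫ t : ℝ, g m 0 t = Real.Gamma ((m : ℝ) + 1 / 2) := by
        simp only [hg, if_pos rfl]
        exact moment m
      have i1 : ∫ t : ℝ, g m 1 t = Real.Gamma (((k - m : ℕ) : ℝ) + 1 / 2) := by
        simp only [hg, if_neg h01.symm, if_pos rfl]
        exact moment (k - m)
      have irest : ∀ i ∈ (univ.erase 0).erase (1 : Fin (e + 2)),
          ∫ t : ℝ, g m i t = Real.Gamma (1 / 2) := by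
        intro i hi
        rw [Finset.mem_erase, Finset.mem_erase] at hi
        simp only [hg, if_neg hi.2.1, if_neg hi.1, one_mul]
        simpa using moment 0
      rw [i0, i1, Finset.prod_congr rfl irest, Finset.prod_const]
      have hcard : ((univ.erase (0 : Fin (e + 2))).erase 1).card = e := by
        rw [Finset.card_erase_of_mem (Finset.mem_erase.mpr ⟨h01.symm, Finset.mem_univ 1⟩),
          Finset.card_erase_of_mem (Finset.mem_univ 0)]
        simp
      rw [hcard]
      ring
    rw [Finset.sum_congr rfl hterm]
    rw [show (∑ m ∈ range (k + 1), (k.choose m : ℝ) * (Real.Gamma ((m : ℝ) + 1 / 2)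
          * Real.Gamma (((k - m : ℕ) : ℝ) + 1 / 2) * Real.Gamma (1 / 2) ^ e))
        = (∑ m ∈ range (k + 1), (k.choose m : ℝ) * Real.Gamma ((m : ℝ) + 1 / 2)
          * Real.Gamma (((k - m : ℕ) : ℝ) + 1 / 2)) * Real.Gamma (1 / 2) ^ e from by
      rw [Finset.sum_mul]; exact Finset.sum_congr rfl fun m _ => by ring]
    rw [gammaSum k]
    ring
  · intro m _
    exact (Integrable.fintype_prod (f := g m) (hgint m)).const_mul _

lemma euclid_integral (e k : ℕ) :
    ∫ x : EuclideanSpace ℝ (Fin (e + 2)), (x 0 ^ 2 + x 1 ^ 2) ^ k * rexp (-‖x‖ ^ 2)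
      = Real.Gamma (1 / 2) ^ e * (π * k.factorial) := by
  rw [← (MeasurePreserving.symm _ (EuclideanSpace.volume_preserving_symm_measurableEquiv_toLp (Fin (e + 2)))).integral_comp'
    (fun x : EuclideanSpace ℝ (Fin (e + 2)) => (x 0 ^ 2 + x 1 ^ 2) ^ k * rexp (-‖x‖ ^ 2))]
  rw [← pi_integral e k]
  congr 1 with y
  have hc : ∀ i, ((MeasurableEquiv.toLp 2 (Fin (e + 2) → ℝ)).symm.symm y) i = y i := fun i => rfl
  have hnorm : ‖(MeasurableEquiv.toLp 2 (Fin (e + 2) → ℝ)).symm.symm y‖ ^ 2 = ∑ i, y i ^ 2 := by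
    rw [EuclideanSpace.norm_eq, Real.sq_sqrt (Finset.sum_nonneg fun i _ => by positivity)]
    simp [hc]
  rw [hc, hc, hnorm]

lemma volumeIoiPow_integral (n : ℕ) (B : ℝ → ℝ) :
    ∫ x : Ioi (0 : ℝ), B x ∂(Measure.volumeIoiPow n) = ∫ r in Ioi (0 : ℝ), r ^ n * B r := by
  simp only [Measure.volumeIoiPow, ENNReal.ofReal]
  rw [integral_withDensity_eq_integral_smul
    ((measurable_subtype_coe.pow_const _).real_toNNReal),
    integral_subtype_comap measurableSet_Ioi fun a : ℝ => Real.toNNReal (a ^ n) • B a]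
  refine setIntegral_congr_fun measurableSet_Ioi fun x hx => ?_
  rw [NNReal.smul_def, Real.coe_toNNReal _ (pow_nonneg hx.out.le _), smul_eq_mul]

lemma sphere_decomp (e k : ℕ) :
    ∫ x : EuclideanSpace ℝ (Fin (e + 2)), (x 0 ^ 2 + x 1 ^ 2) ^ k * rexp (-‖x‖ ^ 2)
      = (∫ ω : sphere (0 : EuclideanSpace ℝ (Fin (e + 2))) 1,
          ((ω : EuclideanSpace ℝ (Fin (e + 2))) 0 ^ 2
            + (ω : EuclideanSpace ℝ (Fin (e + 2))) 1 ^ 2) ^ k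
          ∂(volume : Measure (EuclideanSpace ℝ (Fin (e + 2)))).toSphere)
        * (Real.Gamma ((k : ℝ) + ((e : ℝ) + 2) / 2) / 2) := by
  set E := EuclideanSpace ℝ (Fin (e + 2))
  set f : E → ℝ := fun x => (x 0 ^ 2 + x 1 ^ 2) ^ k * rexp (-‖x‖ ^ 2) with hf
  set A : sphere (0 : E) 1 → ℝ := fun ω => ((ω : E) 0 ^ 2 + (ω : E) 1 ^ 2) ^ k with hA
  set B : ℝ → ℝ := fun r => r ^ (2 * k) * rexp (-r ^ 2) with hB
  have hdim : Module.finrank ℝ E = e + 2 := finrank_euclideanSpace_fin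
  have step1 : ∫ x : E, f x = ∫ x : ({0}ᶜ : Set E), f x ∂(volume.comap Subtype.val) := by
    rw [integral_subtype_comap (measurableSet_singleton (0 : E)).compl f,
      MeasureTheory.restrict_compl_singleton]
  have hpt : ∀ x : ({0}ᶜ : Set E),
      f x = A ((homeomorphUnitSphereProd E) x).1 * B (((homeomorphUnitSphereProd E) x).2 : ℝ) := by
    rintro ⟨x, hx⟩
    have hx0 : x ≠ 0 := hx
    have hn : ‖x‖ ≠ 0 := norm_ne_zero_iff.mpr hx0
    simp only [hA, hB, hf, homeomorphUnitSphereProd_apply_fst_coe,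
      homeomorphUnitSphereProd_apply_snd_coe]
    have h0 : ((‖x‖⁻¹ • x : E)) 0 = ‖x‖⁻¹ * x 0 := rfl
    have h1 : ((‖x‖⁻¹ • x : E)) 1 = ‖x‖⁻¹ * x 1 := rfl
    rw [h0, h1]
    have hinv : ‖x‖⁻¹ ^ (2 * k) * ‖x‖ ^ (2 * k) = 1 := by
      rw [← mul_pow, inv_mul_cancel₀ hn, one_pow]
    have e1 : (‖x‖⁻¹ * x 0) ^ 2 + (‖x‖⁻¹ * x 1) ^ 2 = ‖x‖⁻¹ ^ 2 * (x 0 ^ 2 + x 1 ^ 2) := by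
      ring
    rw [e1, mul_pow, ← pow_mul]
    rw [show ‖x‖⁻¹ ^ (2 * k) * (x 0 ^ 2 + x 1 ^ 2) ^ k * (‖x‖ ^ (2 * k) * rexp (-‖x‖ ^ 2))
        = (‖x‖⁻¹ ^ (2 * k) * ‖x‖ ^ (2 * k)) * ((x 0 ^ 2 + x 1 ^ 2) ^ k * rexp (-‖x‖ ^ 2)) from by
      ring, hinv, one_mul]
  have step2 : ∫ x : ({0}ᶜ : Set E), f x ∂(volume.comap Subtype.val)
      = ∫ p : sphere (0 : E) 1 × Ioi (0 : ℝ), A p.1 * B p.2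
          ∂((volume : Measure E).toSphere.prod (Measure.volumeIoiPow (e + 1))) := by
    have := ((volume : Measure E).measurePreserving_homeomorphUnitSphereProd).integral_comp
      (Homeomorph.measurableEmbedding _) (fun p : sphere (0 : E) 1 × Ioi (0 : ℝ) => A p.1 * B p.2)
    rw [hdim] at this
    rw [show e + 2 - 1 = e + 1 from rfl] at this
    rw [← this]
    exact integral_congr_ae (Filter.Eventually.of_forall hpt)
  have step3 : ∫ p : sphere (0 : E) 1 × Ioi (0 : ℝ), A p.1 * B p.2
        ∂((volume : Measure E).toSphere.prod (Measure.volumeIoiPow (e + 1)))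
      = (∫ ω, A ω ∂(volume : Measure E).toSphere)
        * ∫ r : Ioi (0 : ℝ), B r ∂(Measure.volumeIoiPow (e + 1)) :=
    integral_prod_mul A (fun r : Ioi (0 : ℝ) => B r)
  have step4 : ∫ r : Ioi (0 : ℝ), B r ∂(Measure.volumeIoiPow (e + 1))
      = Real.Gamma ((k : ℝ) + ((e : ℝ) + 2) / 2) / 2 := by
    rw [volumeIoiPow_integral]
    have : ∀ r : ℝ, r ^ (e + 1) * B r = r ^ (e + 1 + 2 * k) * rexp (-r ^ 2) := by
      intro r
      rw [hB, pow_add]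
      ring
    rw [show (fun r : ℝ => r ^ (e + 1) * B r)
        = fun r : ℝ => r ^ (e + 1 + 2 * k) * rexp (-r ^ 2) from funext this]
    rw [radial (e + 1 + 2 * k)]
    congr 1
    push_cast
    ring
  rw [step1, step2, step3, step4]

/-- For every `d ≥ 1` and every natural number `k`, the integral over the unit
sphere `S^d ⊆ ℝ^{d+1}` of `(x₁² + x₂²)^k` with respect to the canonical surface measure `σ`
(the measure `volume.toSphere` obtained from the Lebesgue measure by the polar-coordinates
decomposition) equals `2 π^{(d+1)/2} k! / Γ(k + (d+1)/2)`.  Equivalently, the function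
`φ_k(x) = c_k (x₁ + i x₂)^k` with `c_k = (Γ(k+(d+1)/2)/(2 π^{(d+1)/2} k!))^{1/2}` has
`L²(S^d, σ)`-norm equal to `1`. -/
theorem stmt_2 (d k : ℕ) (hd : 1 ≤ d) :
    (∫ x : Metric.sphere (0 : EuclideanSpace ℝ (Fin (d + 1))) 1,
        ((x : EuclideanSpace ℝ (Fin (d + 1))) 0 ^ 2
          + (x : EuclideanSpace ℝ (Fin (d + 1))) 1 ^ 2) ^ k
        ∂(volume : Measure (EuclideanSpace ℝ (Fin (d + 1)))).toSphere)
      = 2 * Real.pi ^ (((d : ℝ) + 1) / 2) * (k.factorial : ℝ)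
          / Real.Gamma ((k : ℝ) + ((d : ℝ) + 1) / 2)
    ∧ (∫ x : Metric.sphere (0 : EuclideanSpace ℝ (Fin (d + 1))) 1,
        ‖(Real.sqrt (Real.Gamma ((k : ℝ) + ((d : ℝ) + 1) / 2)
              / (2 * Real.pi ^ (((d : ℝ) + 1) / 2) * (k.factorial : ℝ))) : ℂ)
            * (((x : EuclideanSpace ℝ (Fin (d + 1))) 0 : ℂ)
                + Complex.I * ((x : EuclideanSpace ℝ (Fin (d + 1))) 1 : ℂ)) ^ k‖ ^ 2
        ∂(volume : Measure (EuclideanSpace ℝ (Fin (d + 1)))).toSphere)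
      = 1 := by
  obtain ⟨e, rfl⟩ : ∃ e, d = e + 1 := ⟨d - 1, by omega⟩
  have hcast : (((e + 1 : ℕ) : ℝ) + 1) / 2 = ((e : ℝ) + 2) / 2 := by push_cast; ring
  have hG : 0 < Real.Gamma ((k : ℝ) + ((e : ℝ) + 2) / 2) :=
    Real.Gamma_pos_of_pos (by positivity)
  have hpi : 0 < π ^ (((e : ℝ) + 2) / 2) := Real.rpow_pos_of_pos pi_pos _
  have hkf : 0 < (k.factorial : ℝ) := Nat.cast_pos.mpr k.factorial_pos
  have part1 :
      (∫ x : Metric.sphere (0 : EuclideanSpace ℝ (Fin (e + 2))) 1,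
          ((x : EuclideanSpace ℝ (Fin (e + 2))) 0 ^ 2
            + (x : EuclideanSpace ℝ (Fin (e + 2))) 1 ^ 2) ^ k
          ∂(volume : Measure (EuclideanSpace ℝ (Fin (e + 2)))).toSphere)
        = 2 * π ^ (((e : ℝ) + 2) / 2) * (k.factorial : ℝ)
            / Real.Gamma ((k : ℝ) + ((e : ℝ) + 2) / 2) := by
    have h := (sphere_decomp e k).symm.trans (euclid_integral e k)
    have hsq : Real.Gamma (1 / 2) ^ e * π = π ^ (((e : ℝ) + 2) / 2) := by
      rw [Real.Gamma_one_half_eq, Real.sqrt_eq_rpow,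
        ← Real.rpow_natCast (π ^ ((1 : ℝ) / 2)) e, ← Real.rpow_mul pi_pos.le]
      nth_rewrite 2 [← Real.rpow_one π]
      rw [← Real.rpow_add pi_pos]
      congr 1
      ring
    rw [eq_div_iff hG.ne', ← hsq]
    linear_combination (2 : ℝ) * h
  constructor
  · rw [hcast]
    exact part1
  · rw [hcast]
    set t : ℝ := Real.Gamma ((k : ℝ) + ((e : ℝ) + 2) / 2)
      / (2 * π ^ (((e : ℝ) + 2) / 2) * (k.factorial : ℝ)) with hts
    have ht : 0 < t := by positivity
    have hpt : ∀ x : Metric.sphere (0 : EuclideanSpace ℝ (Fin (e + 2))) 1,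
        ‖((Real.sqrt t : ℝ) : ℂ)
            * (((x : EuclideanSpace ℝ (Fin (e + 2))) 0 : ℂ)
                + Complex.I * ((x : EuclideanSpace ℝ (Fin (e + 2))) 1 : ℂ)) ^ k‖ ^ 2
          = t * (((x : EuclideanSpace ℝ (Fin (e + 2))) 0) ^ 2
              + ((x : EuclideanSpace ℝ (Fin (e + 2))) 1) ^ 2) ^ k := by
      intro x
      set a : ℝ := (x : EuclideanSpace ℝ (Fin (e + 2))) 0
      set b : ℝ := (x : EuclideanSpace ℝ (Fin (e + 2))) 1
      rw [norm_mul, norm_pow, mul_pow, ← pow_mul, mul_comm k 2, pow_mul]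
      have h1 : ‖((Real.sqrt t : ℝ) : ℂ)‖ ^ 2 = t := by
        rw [Complex.norm_real, Real.norm_eq_abs, sq_abs, Real.sq_sqrt ht.le]
      have h2 : ‖(a : ℂ) + Complex.I * (b : ℂ)‖ ^ 2 = a ^ 2 + b ^ 2 := by
        rw [show (a : ℂ) + Complex.I * (b : ℂ) = (a : ℂ) + (b : ℂ) * Complex.I by ring,
          Complex.norm_add_mul_I, Real.sq_sqrt (by positivity)]
      rw [h1, h2]
    rw [show (fun x : Metric.sphere (0 : EuclideanSpace ℝ (Fin (e + 2))) 1 =>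
        ‖((Real.sqrt t : ℝ) : ℂ)
            * (((x : EuclideanSpace ℝ (Fin (e + 2))) 0 : ℂ)
                + Complex.I * ((x : EuclideanSpace ℝ (Fin (e + 2))) 1 : ℂ)) ^ k‖ ^ 2)
        = fun x : Metric.sphere (0 : EuclideanSpace ℝ (Fin (e + 2))) 1 =>
          t * (((x : EuclideanSpace ℝ (Fin (e + 2))) 0) ^ 2
              + ((x : EuclideanSpace ℝ (Fin (e + 2))) 1) ^ 2) ^ k from funext hpt]
    rw [integral_const_mul, part1, hts]
    field_simp
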